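/- arXiv:0806.2718 — 4 statements merged into one kernel-verified Lean document; each statement's English description precedes it below -/
import Mathlib

section
/- Let U be a standard normal random variable and R⁺ an independent Rayleigh-distributed random variable (density f(r) = r·e^{-r²/2} for r > 0). Then for any a > 0, b ∈ ℝ and any x ∈ ℝ, P(aU + bR⁺ > x) = Φ(-x/a) + e^{-x²/(2σ²)} · (b/σ) · Φ(bx/(σa)), where σ = √(a² + b²) and Φ is the standard normal CDF. -/
open MeasureTheory Real Set Filter Topology

/-- The standard normal cumulative distribution function Φ. -/
noncomputable def stdNormalCDF (x : ℝ) : ℝ :=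
  ∫ t in Set.Iic x, (Real.sqrt (2 * Real.pi))⁻¹ * Real.exp (-t ^ 2 / 2)

namespace Aux

noncomputable def phi (t : ℝ) : ℝ := (Real.sqrt (2 * Real.pi))⁻¹ * Real.exp (-t ^ 2 / 2)

lemma phi_cont : Continuous phi := by unfold phi; fun_prop

lemma cdf_def (y : ℝ) : stdNormalCDF y = ∫ t in Set.Iic y, phi t := rfl

lemma integrable_exp_half : Integrable (fun t : ℝ => Real.exp (-t ^ 2 / 2)) := by
  have := integrable_exp_neg_mul_sq (by norm_num : (0:ℝ) < 1/2)
  refine this.congr (Eventually.of_forall fun t => ?_)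
  ring_nf

lemma phi_integrable : Integrable phi := integrable_exp_half.const_mul _

lemma phi_nonneg (t : ℝ) : 0 ≤ phi t :=
  mul_nonneg (inv_nonneg.2 (Real.sqrt_nonneg _)) (Real.exp_pos _).le

lemma sqrt_two_pi_pos : 0 < Real.sqrt (2 * Real.pi) :=
  Real.sqrt_pos.2 (by positivity)

lemma integral_exp_half : ∫ t : ℝ, Real.exp (-t ^ 2 / 2) = Real.sqrt (2 * Real.pi) := by
  have := integral_gaussian (1/2)
  rw [show Real.pi / (1/2) = 2 * Real.pi by ring] at this
  rw [← this]
  congr 1; ext t; ring_nf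

lemma integral_phi : ∫ t : ℝ, phi t = 1 := by
  unfold phi
  rw [MeasureTheory.integral_const_mul, integral_exp_half, inv_mul_cancel₀ sqrt_two_pi_pos.ne']

lemma cdf_nonneg (y : ℝ) : 0 ≤ stdNormalCDF y := by
  rw [cdf_def]; exact integral_nonneg fun t => phi_nonneg t

lemma cdf_le_one (y : ℝ) : stdNormalCDF y ≤ 1 := by
  rw [cdf_def, ← integral_phi]
  exact setIntegral_le_integral phi_integrable (Eventually.of_forall phi_nonneg)

lemma cdf_hasDerivAt (y : ℝ) : HasDerivAt stdNormalCDF (phi y) y := by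
  have key : ∀ z : ℝ, stdNormalCDF z = stdNormalCDF 0 + ∫ t in (0:ℝ)..z, phi t := by
    intro z
    rw [cdf_def, cdf_def, ← intervalIntegral.integral_Iic_sub_Iic
      phi_integrable.integrableOn phi_integrable.integrableOn]
    ring
  have h := ((phi_cont.integral_hasStrictDerivAt 0 y).hasDerivAt).const_add (stdNormalCDF 0)
  exact h.congr_of_eventuallyEq (Eventually.of_forall fun z => (key z))

lemma cdf_cont : Continuous stdNormalCDF :=
  continuous_iff_continuousAt.2 fun y => (cdf_hasDerivAt y).continuousAt

lemma cdf_neg (y : ℝ) : stdNormalCDF (-y) = ∫ t in Set.Ioi y, phi t := by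
  rw [cdf_def, ← integral_comp_neg_Ioi]
  refine setIntegral_congr_fun measurableSet_Ioi fun t _ => ?_
  unfold phi; rw [neg_pow]; ring_nf

lemma integral_Ioi_comp_add_right (f : ℝ → ℝ) (p c : ℝ) :
    ∫ u in Set.Ioi p, f (u + c) = ∫ u in Set.Ioi (p + c), f u := by
  rw [← integral_indicator measurableSet_Ioi, ← integral_indicator measurableSet_Ioi,
    ← integral_add_right_eq_self (fun u => (Set.Ioi (p+c)).indicator f u) c]
  congr 1; ext u
  by_cases h : p < u
  · rw [Set.indicator_of_mem (by simpa using h), Set.indicator_of_mem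
      (by simp [Set.mem_Ioi]; linarith)]
  · rw [Set.indicator_of_notMem (by simpa using h), Set.indicator_of_notMem
      (by simp only [Set.mem_Ioi]; intro hc; exact h (by linarith))]

end Aux

open Aux

/-- Lemma 5.3: for independent standard normal `U` and Rayleigh `R⁺`,
`P(aU + bR⁺ > x) = Φ(-x/a) + e^{-x²/(2σ²)}·(b/σ)·Φ(bx/(σa))` with `σ = √(a²+b²)`.
The probability is written by conditioning on `R⁺ = r` (density `r e^{-r²/2}` on `(0,∞)`),
so that `P(aU > x - br) = Φ((br - x)/a)`. -/
theorem stmt0 (a b x : ℝ) (ha : 0 < a) :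
    (∫ r in Set.Ioi (0 : ℝ), r * Real.exp (-r ^ 2 / 2) * stdNormalCDF ((b * r - x) / a)) =
      stdNormalCDF (-x / a) +
        Real.exp (-x ^ 2 / (2 * Real.sqrt (a ^ 2 + b ^ 2) ^ 2)) *
          (b / Real.sqrt (a ^ 2 + b ^ 2)) *
          stdNormalCDF (b * x / (Real.sqrt (a ^ 2 + b ^ 2) * a)) := by
  set s := Real.sqrt (a ^ 2 + b ^ 2) with hs_def
  have hab : (0:ℝ) < a ^ 2 + b ^ 2 := by positivity
  have hs : 0 < s := Real.sqrt_pos.2 hab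
  have hs2 : s ^ 2 = a ^ 2 + b ^ 2 := Real.sq_sqrt hab.le
  set k := s / a with hk_def
  have hk : 0 < k := div_pos hs ha
  set c := b * x / (s * a) with hc_def
  -- the two integrands
  set F : ℝ → ℝ := fun r => -(Real.exp (-r ^ 2 / 2) * stdNormalCDF ((b * r - x) / a))
    with hF_def
  set T1 : ℝ → ℝ := fun r => r * Real.exp (-r ^ 2 / 2) * stdNormalCDF ((b * r - x) / a)
    with hT1_def
  set T2 : ℝ → ℝ := fun r => Real.exp (-r ^ 2 / 2) * (b / a * phi ((b * r - x) / a))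
    with hT2_def
  -- derivative of F
  have hd : ∀ r : ℝ, HasDerivAt F (T1 r - T2 r) r := by
    intro r
    have h1 : HasDerivAt (fun r : ℝ => Real.exp (-r ^ 2 / 2)) (-r * Real.exp (-r ^ 2 / 2)) r := by
      have h0 : HasDerivAt (fun r : ℝ => -r ^ 2 / 2) (-r) r := by
        have := ((hasDerivAt_pow 2 r).neg).div_const 2
        simpa using this.congr_deriv (by push_cast; ring)
      simpa [mul_comm] using h0.exp
    have h2 : HasDerivAt (fun r : ℝ => (b * r - x) / a) (b / a) r := by
      simpa using (((hasDerivAt_id r).const_mul b).sub_const x).div_const a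
    have h3 := (cdf_hasDerivAt ((b * r - x) / a)).comp r h2
    have h4 := (h1.mul h3).neg
    refine h4.congr_deriv ?_
    simp only [hT1_def, hT2_def, Function.comp_apply, Function.comp]
    ring
  -- continuity of F
  have hFcont : Continuous F := by
    apply Continuous.neg
    exact (by fun_prop : Continuous fun r : ℝ => Real.exp (-r ^ 2 / 2)).mul
      (cdf_cont.comp (by fun_prop))
  -- integrability of T1
  have hbase : Integrable (fun r : ℝ => r * Real.exp (-r ^ 2 / 2)) := by
    have := integrable_mul_exp_neg_mul_sq (by norm_num : (0:ℝ) < 1/2)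
    refine this.congr (Eventually.of_forall fun t => ?_)
    ring_nf
  have hcdf_abs : ∀ y : ℝ, |stdNormalCDF y| ≤ 1 := fun y =>
    abs_le.2 ⟨by linarith [cdf_nonneg y], cdf_le_one y⟩
  have hint1 : IntegrableOn T1 (Set.Ioi (0:ℝ)) := by
    refine Integrable.mono hbase.integrableOn ?_ (Eventually.of_forall fun r => ?_)
    · exact ((continuous_id.mul (by fun_prop)).mul
        (cdf_cont.comp (by fun_prop))).aestronglyMeasurable
    · simp only [hT1_def, norm_mul, Real.norm_eq_abs]
      calc |r| * |Real.exp (-r ^ 2 / 2)| * |stdNormalCDF ((b * r - x) / a)|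
          ≤ |r| * |Real.exp (-r ^ 2 / 2)| * 1 := by
            gcongr; exact hcdf_abs _
        _ = |r| * |Real.exp (-r ^ 2 / 2)| := by ring
  -- integrability of T2
  have hphile : ∀ t : ℝ, phi t ≤ (Real.sqrt (2 * Real.pi))⁻¹ := by
    intro t
    unfold phi
    calc (Real.sqrt (2 * Real.pi))⁻¹ * Real.exp (-t ^ 2 / 2)
        ≤ (Real.sqrt (2 * Real.pi))⁻¹ * 1 :=
          mul_le_mul_of_nonneg_left (Real.exp_le_one_iff.2 (by nlinarith [sq_nonneg t]))
            (by positivity)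
      _ = _ := mul_one _
  set M : ℝ := |b / a| * (Real.sqrt (2 * Real.pi))⁻¹ with hM_def
  have hM0 : 0 ≤ M := by positivity
  have hint2 : IntegrableOn T2 (Set.Ioi (0:ℝ)) := by
    refine Integrable.mono ((integrable_exp_half.const_mul M).integrableOn) ?_
      (Eventually.of_forall fun r => ?_)
    · exact ((by fun_prop : Continuous fun r : ℝ => Real.exp (-r ^ 2 / 2)).mul
        (continuous_const.mul (phi_cont.comp (by fun_prop)))).aestronglyMeasurable
    · simp only [hT2_def, norm_mul, Real.norm_eq_abs]
      have h1 : |phi ((b * r - x) / a)| ≤ (Real.sqrt (2 * Real.pi))⁻¹ := by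
        rw [abs_of_nonneg (phi_nonneg _)]; exact hphile _
      calc |Real.exp (-r ^ 2 / 2)| * (|b / a| * |phi ((b * r - x) / a)|)
          ≤ |Real.exp (-r ^ 2 / 2)| * (|b / a| * (Real.sqrt (2 * Real.pi))⁻¹) := by gcongr
        _ = M * |Real.exp (-r ^ 2 / 2)| := by rw [hM_def]; ring
        _ = |M| * |Real.exp (-r ^ 2 / 2)| := by rw [abs_of_nonneg hM0]
  -- limit of F at infinity
  have hexp0 : Tendsto (fun r : ℝ => Real.exp (-r ^ 2 / 2)) atTop (𝓝 0) := by
    apply Real.tendsto_exp_atBot.comp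
    have h1 : Tendsto (fun r : ℝ => r ^ 2) atTop atTop := tendsto_pow_atTop two_ne_zero
    exact (tendsto_neg_atTop_atBot.comp h1).atBot_div_const (by norm_num)
  have htop : Tendsto F atTop (𝓝 0) := by
    have hlow := hexp0.neg
    rw [neg_zero] at hlow
    refine tendsto_of_tendsto_of_tendsto_of_le_of_le hlow tendsto_const_nhds
      (fun r => ?_) (fun r => ?_)
    · simp only [hF_def, neg_le_neg_iff]
      calc Real.exp (-r ^ 2 / 2) * stdNormalCDF ((b * r - x) / a)
          ≤ Real.exp (-r ^ 2 / 2) * 1 :=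
            mul_le_mul_of_nonneg_left (cdf_le_one _) (Real.exp_pos _).le
        _ = _ := mul_one _
    · simp only [hF_def, neg_nonpos]
      exact mul_nonneg (Real.exp_pos _).le (cdf_nonneg _)
  -- integration by parts
  have hIBP := integral_Ioi_of_hasDerivAt_of_tendsto (a := 0)
    hFcont.continuousWithinAt (fun r _ => hd r) (hint1.sub hint2) htop
  have hF0 : F 0 = -stdNormalCDF (-x / a) := by
    simp only [hF_def]
    norm_num
  rw [integral_sub hint1 hint2, hF0, zero_sub, neg_neg] at hIBP
  have hstep1 : (∫ r in Set.Ioi (0:ℝ), T1 r)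
      = stdNormalCDF (-x / a) + ∫ r in Set.Ioi (0:ℝ), T2 r := by linarith
  -- now compute ∫ T2
  have hexp_id : ∀ r : ℝ, Real.exp (-r ^ 2 / 2) * Real.exp (-((b * r - x) / a) ^ 2 / 2)
      = Real.exp (-x ^ 2 / (2 * (a ^ 2 + b ^ 2))) * Real.exp (-(k * r - c) ^ 2 / 2) := by
    intro r
    rw [← Real.exp_add, ← Real.exp_add]
    congr 1
    have hkc : k * r - c = ((a ^ 2 + b ^ 2) * r - b * x) / (s * a) := by
      rw [← hs2, hk_def, hc_def]
      field_simp
    rw [hkc, div_pow, div_pow, mul_pow, hs2]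
    field_simp
    ring
  have hpt : ∀ r : ℝ, T2 r = b / a * (Real.sqrt (2 * Real.pi))⁻¹ *
      (Real.exp (-x ^ 2 / (2 * (a ^ 2 + b ^ 2))) * Real.exp (-(k * r - c) ^ 2 / 2)) := by
    intro r
    simp only [hT2_def]
    unfold phi
    linear_combination (b / a) * (Real.sqrt (2 * Real.pi))⁻¹ * hexp_id r
  have hT2int : (∫ r in Set.Ioi (0:ℝ), T2 r)
      = b / a * (Real.sqrt (2 * Real.pi))⁻¹ * Real.exp (-x ^ 2 / (2 * (a ^ 2 + b ^ 2))) *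
        ∫ r in Set.Ioi (0:ℝ), Real.exp (-(k * r - c) ^ 2 / 2) := by
    rw [show (∫ r in Set.Ioi (0:ℝ), T2 r) = ∫ r in Set.Ioi (0:ℝ),
        b / a * (Real.sqrt (2 * Real.pi))⁻¹ *
        (Real.exp (-x ^ 2 / (2 * (a ^ 2 + b ^ 2))) * Real.exp (-(k * r - c) ^ 2 / 2)) from
      setIntegral_congr_fun measurableSet_Ioi fun r _ => hpt r]
    rw [MeasureTheory.integral_const_mul, MeasureTheory.integral_const_mul]
    ring
  -- change of variables
  have hcv : (∫ r in Set.Ioi (0:ℝ), Real.exp (-(k * r - c) ^ 2 / 2))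
      = k⁻¹ * ∫ u in Set.Ioi (0:ℝ), Real.exp (-(u - c) ^ 2 / 2) := by
    have := integral_comp_mul_left_Ioi (fun u => Real.exp (-(u - c) ^ 2 / 2)) 0 hk
    simpa [mul_zero, smul_eq_mul] using this
  have hsh : (∫ u in Set.Ioi (0:ℝ), Real.exp (-(u - c) ^ 2 / 2))
      = ∫ v in Set.Ioi (-c), Real.exp (-v ^ 2 / 2) := by
    have h := integral_Ioi_comp_add_right (fun v => Real.exp (-v ^ 2 / 2)) 0 (-c)
    rw [zero_add] at h
    rw [← h]
    refine setIntegral_congr_fun measurableSet_Ioi fun u _ => ?_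
    rw [sub_eq_add_neg]
  have hioi : (∫ v in Set.Ioi (-c), Real.exp (-v ^ 2 / 2))
      = Real.sqrt (2 * Real.pi) * stdNormalCDF c := by
    rw [show stdNormalCDF c = stdNormalCDF (-(-c)) by rw [neg_neg], cdf_neg]
    unfold phi
    rw [MeasureTheory.integral_const_mul, ← mul_assoc,
      mul_inv_cancel₀ sqrt_two_pi_pos.ne', one_mul]
  -- assemble
  rw [hstep1, hT2int, hcv, hsh, hioi]
  rw [← hs2]
  congr 1
  have hsqrt_ne : Real.sqrt (2 * Real.pi) ≠ 0 := sqrt_two_pi_pos.ne'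
  rw [hk_def, hc_def]
  field_simp
end

section
/- Let (X, Y) be zero-mean jointly Gaussian with Var(X) = σ_X², Var(Y) = σ_Y², and correlation ρ_{XY}. Then the probability measure A ↦ E[X⁺·1{Y ∈ A}]/E[X⁺] is the law of σ_Y(ρ_{XY}·R⁺ + √(1-ρ_{XY}²)·U), where R⁺ is Rayleigh (density r·e^{-r²/2}, r>0), U is standard normal, and R⁺, U are independent. -/
open MeasureTheory Real Set

/-- The bivariate zero-mean Gaussian density with standard deviations `σX, σY` and
correlation `ρ`. -/
noncomputable def bvnDensity (σX σY ρ x y : ℝ) : ℝ :=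
  (2 * Real.pi * σX * σY * Real.sqrt (1 - ρ ^ 2))⁻¹ *
    Real.exp (-(x ^ 2 / σX ^ 2 - 2 * ρ * x * y / (σX * σY) + y ^ 2 / σY ^ 2) /
      (2 * (1 - ρ ^ 2)))

lemma intIicAffine (g : ℝ → ℝ) (w b : ℝ) {a : ℝ} (ha : 0 < a) :
    ∫ y in Iic w, g (a * y + b) = a⁻¹ * ∫ t in Iic (a * w + b), g t := by
  have h1 : ∀ y : ℝ, (Iic w).indicator (fun y => g (a * y + b)) y
      = (Iic (a * w + b)).indicator g (a * y + b) := by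
    intro y
    by_cases hy : y ≤ w
    · rw [indicator_of_mem (mem_Iic.mpr hy), indicator_of_mem]
      exact mem_Iic.mpr (by nlinarith)
    · rw [indicator_of_notMem (by simpa using hy), indicator_of_notMem]
      intro hmem
      exact hy (by nlinarith [mem_Iic.mp hmem])
  rw [← integral_indicator measurableSet_Iic, ← integral_indicator measurableSet_Iic]
  simp_rw [h1]
  rw [show (fun y : ℝ => (Iic (a*w+b)).indicator g (a * y + b))
      = fun y : ℝ => (fun t => (Iic (a*w+b)).indicator g (t + b)) (a * y) from rfl]
  rw [MeasureTheory.Measure.integral_comp_mul_left (fun t => (Iic (a*w+b)).indicator g (t + b)) a]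
  rw [integral_add_right_eq_self]
  rw [abs_of_pos (inv_pos.mpr ha), smul_eq_mul]

lemma intXGauss {b : ℝ} (hb : 0 < b) :
    ∫ x in Ioi (0:ℝ), x * Real.exp (-b * x ^ 2) = (2 * b)⁻¹ := by
  have hderiv : ∀ x ∈ Ici (0:ℝ), HasDerivAt (fun x : ℝ => -(2*b)⁻¹ * Real.exp (-b * x ^ 2))
      (x * Real.exp (-b * x ^ 2)) x := by
    intro x _
    have h1 : HasDerivAt (fun x : ℝ => -b * x ^ 2) (-b * (2 * x)) x := by
      simpa using ((hasDerivAt_pow 2 x).const_mul (-b))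
    have := (h1.exp).const_mul (-(2*b)⁻¹)
    refine this.congr_deriv ?_
    field_simp
  have htend : Filter.Tendsto (fun x : ℝ => -(2*b)⁻¹ * Real.exp (-b * x ^ 2))
      Filter.atTop (nhds 0) := by
    have h2 : Filter.Tendsto (fun x : ℝ => -b * x ^ 2) Filter.atTop Filter.atBot := by
      apply Filter.Tendsto.const_mul_atTop_of_neg (by linarith)
      exact Filter.tendsto_pow_atTop two_ne_zero
    have := (Real.tendsto_exp_atBot.comp h2).const_mul (-(2*b)⁻¹)
    simpa using this
  have := integral_Ioi_of_hasDerivAt_of_tendsto' hderiv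
    ((integrable_mul_exp_neg_mul_sq hb).integrableOn) htend
  rw [this]
  simp

lemma one_sub_sq_pos {ρ : ℝ} (hρ : |ρ| < 1) : 0 < 1 - ρ ^ 2 := by
  nlinarith [sq_abs ρ, abs_nonneg ρ]

lemma bvnFactor (σX σY ρ : ℝ) (hX : 0 < σX) (hY : 0 < σY) (hρ : |ρ| < 1) (x y : ℝ) :
    bvnDensity σX σY ρ x y =
      ((σX * Real.sqrt (2 * π))⁻¹ * Real.exp (-x ^ 2 / (2 * σX ^ 2))) *
      ((σY * Real.sqrt (1 - ρ ^ 2) * Real.sqrt (2 * π))⁻¹ *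
        Real.exp (-((y / σY - ρ * x / σX) / Real.sqrt (1 - ρ ^ 2)) ^ 2 / 2)) := by
  have h1 := one_sub_sq_pos hρ
  have hs : 0 < Real.sqrt (1 - ρ ^ 2) := Real.sqrt_pos.mpr h1
  have h2π : (0:ℝ) < 2 * π := by positivity
  have hq : Real.sqrt (2 * π) ^ 2 = 2 * π := Real.sq_sqrt h2π.le
  have hs2 : ((y / σY - ρ * x / σX) / Real.sqrt (1 - ρ ^ 2)) ^ 2
      = (y / σY - ρ * x / σX) ^ 2 / (1 - ρ ^ 2) := by
    rw [div_pow, Real.sq_sqrt h1.le]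
  unfold bvnDensity
  rw [mul_mul_mul_comm, ← Real.exp_add]
  congr 1
  · rw [← mul_inv]
    congr 1
    linear_combination (-(σX * σY * Real.sqrt (1 - ρ ^ 2))) * hq
  · rw [hs2]
    field_simp
    ring

lemma intLineAffine (g : ℝ → ℝ) (b : ℝ) {a : ℝ} (ha : 0 < a) :
    ∫ y : ℝ, g (a * y + b) = a⁻¹ * ∫ t : ℝ, g t := by
  rw [show (fun y : ℝ => g (a * y + b)) = fun y : ℝ => (fun t => g (t + b)) (a * y) from rfl,
    MeasureTheory.Measure.integral_comp_mul_left (fun t => g (t + b)) a,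
    integral_add_right_eq_self, abs_of_pos (inv_pos.mpr ha), smul_eq_mul]

lemma intGaussStd : ∫ t : ℝ, Real.exp (-t ^ 2 / 2) = Real.sqrt (2 * π) := by
  have : ∀ t : ℝ, -t ^ 2 / 2 = -(2⁻¹ : ℝ) * t ^ 2 := fun t => by ring
  simp_rw [this]
  rw [integral_gaussian]
  ring

lemma intGaussIic (w c : ℝ) {σ s : ℝ} (hσ : 0 < σ) (hs : 0 < s) :
    ∫ y in Iic w, (Real.sqrt (2 * π))⁻¹ * Real.exp (-((y / σ - c) / s) ^ 2 / 2)
      = σ * s * stdNormalCDF ((w / σ - c) / s) := by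
  have ha : (0:ℝ) < (σ * s)⁻¹ := by positivity
  have harg : ∀ y : ℝ, (y / σ - c) / s = (σ * s)⁻¹ * y + (-c / s) := by
    intro y; field_simp; ring
  calc ∫ y in Iic w, (Real.sqrt (2 * π))⁻¹ * Real.exp (-((y / σ - c) / s) ^ 2 / 2)
      = ∫ y in Iic w, (fun t => (Real.sqrt (2 * π))⁻¹ * Real.exp (-t ^ 2 / 2))
          ((σ * s)⁻¹ * y + (-c / s)) := by
        refine setIntegral_congr_fun measurableSet_Iic fun y _ => ?_
        simp only [harg y]
    _ = ((σ * s)⁻¹)⁻¹ * ∫ t in Iic ((σ * s)⁻¹ * w + (-c / s)),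
          (Real.sqrt (2 * π))⁻¹ * Real.exp (-t ^ 2 / 2) :=
        by exact intIicAffine (fun t => (Real.sqrt (2 * π))⁻¹ * Real.exp (-t ^ 2 / 2)) w (-c / s) ha
    _ = σ * s * stdNormalCDF ((w / σ - c) / s) := by
        rw [inv_inv, ← harg w]; rfl

lemma intGaussLine (c : ℝ) {σ s : ℝ} (hσ : 0 < σ) (hs : 0 < s) :
    ∫ y : ℝ, Real.exp (-((y / σ - c) / s) ^ 2 / 2) = σ * s * Real.sqrt (2 * π) := by
  have ha : (0:ℝ) < (σ * s)⁻¹ := by positivity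
  have harg : ∀ y : ℝ, (y / σ - c) / s = (σ * s)⁻¹ * y + (-c / s) := by
    intro y; field_simp; ring
  calc ∫ y : ℝ, Real.exp (-((y / σ - c) / s) ^ 2 / 2)
      = ∫ y : ℝ, (fun t => Real.exp (-t ^ 2 / 2)) ((σ * s)⁻¹ * y + (-c / s)) := by
        congr 1; funext y; simp only [harg y]
    _ = ((σ * s)⁻¹)⁻¹ * ∫ t : ℝ, Real.exp (-t ^ 2 / 2) := by exact intLineAffine (fun t => Real.exp (-t ^ 2 / 2)) (-c / s) ha
    _ = σ * s * Real.sqrt (2 * π) := by rw [inv_inv, intGaussStd]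

lemma bvnNonneg (σX σY ρ : ℝ) (hX : 0 < σX) (hY : 0 < σY) (x y : ℝ) :
    0 ≤ bvnDensity σX σY ρ x y := by
  unfold bvnDensity
  positivity

lemma bvnCont (σX σY ρ : ℝ) : Continuous (fun p : ℝ × ℝ => p.2 * bvnDensity σX σY ρ p.2 p.1) := by
  unfold bvnDensity
  fun_prop

lemma quadBound {ρ : ℝ} (hρ : |ρ| < 1) (u v : ℝ) :
    (1 - |ρ|) * (u ^ 2 + v ^ 2) ≤ u ^ 2 - 2 * ρ * u * v + v ^ 2 := by
  have h1 : ρ * (u * v) ≤ |ρ| * (|u| * |v|) := by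
    calc ρ * (u * v) ≤ |ρ * (u * v)| := le_abs_self _
    _ = |ρ| * (|u| * |v|) := by rw [abs_mul, abs_mul]
  nlinarith [sq_nonneg (|u| - |v|), sq_abs u, sq_abs v, abs_nonneg ρ]

lemma bvnBound (σX σY ρ : ℝ) (hX : 0 < σX) (hY : 0 < σY) (hρ : |ρ| < 1) (x y : ℝ) :
    bvnDensity σX σY ρ x y ≤ (2 * π * σX * σY * Real.sqrt (1 - ρ ^ 2))⁻¹ *
      (Real.exp (-((1 - |ρ|) / (2 * (1 - ρ ^ 2) * σX ^ 2)) * x ^ 2) *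
        Real.exp (-((1 - |ρ|) / (2 * (1 - ρ ^ 2) * σY ^ 2)) * y ^ 2)) := by
  have h1 := one_sub_sq_pos hρ
  have hs : 0 < Real.sqrt (1 - ρ ^ 2) := Real.sqrt_pos.mpr h1
  unfold bvnDensity
  rw [← Real.exp_add]
  have hC : (0:ℝ) ≤ (2 * π * σX * σY * Real.sqrt (1 - ρ ^ 2))⁻¹ := by positivity
  apply mul_le_mul_of_nonneg_left _ hC
  apply Real.exp_le_exp.mpr
  have key := quadBound hρ (x / σX) (y / σY)
  have e1 : (x / σX) ^ 2 = x ^ 2 / σX ^ 2 := div_pow x σX 2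
  have e2 : (y / σY) ^ 2 = y ^ 2 / σY ^ 2 := div_pow y σY 2
  have e3 : 2 * ρ * (x / σX) * (y / σY) = 2 * ρ * x * y / (σX * σY) := by
    field_simp
  rw [e1, e2, e3] at key
  have hgoal : -(x ^ 2 / σX ^ 2 - 2 * ρ * x * y / (σX * σY) + y ^ 2 / σY ^ 2)
      ≤ (-((1 - |ρ|) / (2 * (1 - ρ ^ 2) * σX ^ 2)) * x ^ 2 +
         -((1 - |ρ|) / (2 * (1 - ρ ^ 2) * σY ^ 2)) * y ^ 2) * (2 * (1 - ρ ^ 2)) := by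
    have e4 : (-((1 - |ρ|) / (2 * (1 - ρ ^ 2) * σX ^ 2)) * x ^ 2 +
         -((1 - |ρ|) / (2 * (1 - ρ ^ 2) * σY ^ 2)) * y ^ 2) * (2 * (1 - ρ ^ 2))
        = -((1 - |ρ|) * (x ^ 2 / σX ^ 2 + y ^ 2 / σY ^ 2)) := by
      field_simp
      ring
    rw [e4]
    linarith
  exact (div_le_iff₀ (by linarith : (0:ℝ) < 2 * (1 - ρ ^ 2))).mpr hgoal

lemma bvnIntegrable (σX σY ρ : ℝ) (hX : 0 < σX) (hY : 0 < σY) (hρ : |ρ| < 1) :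
    Integrable (fun p : ℝ × ℝ => p.2 * bvnDensity σX σY ρ p.2 p.1)
      (volume.prod volume) := by
  have h1 := one_sub_sq_pos hρ
  have hs : 0 < Real.sqrt (1 - ρ ^ 2) := Real.sqrt_pos.mpr h1
  set a : ℝ := (1 - |ρ|) / (2 * (1 - ρ ^ 2) * σX ^ 2) with ha_def
  set b : ℝ := (1 - |ρ|) / (2 * (1 - ρ ^ 2) * σY ^ 2) with hb_def
  set C : ℝ := (2 * π * σX * σY * Real.sqrt (1 - ρ ^ 2))⁻¹ with hC_def
  have ha : 0 < a := by
    have : 0 < 1 - |ρ| := by linarith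
    positivity
  have hb : 0 < b := by
    have : 0 < 1 - |ρ| := by linarith
    positivity
  have hC : 0 < C := by positivity
  have hg : Integrable (fun p : ℝ × ℝ =>
      Real.exp (-b * p.1 ^ 2) * (C * (p.2 * Real.exp (-a * p.2 ^ 2)))) (volume.prod volume) :=
    (integrable_exp_neg_mul_sq hb).mul_prod
      ((integrable_mul_exp_neg_mul_sq ha).const_mul C)
  refine hg.abs.mono' ((bvnCont σX σY ρ).aestronglyMeasurable) ?_
  refine Filter.Eventually.of_forall fun p => ?_
  have hbd := bvnBound σX σY ρ hX hY hρ p.2 p.1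
  have hnn := bvnNonneg σX σY ρ hX hY p.2 p.1
  rw [Real.norm_eq_abs, abs_mul, abs_of_nonneg hnn]
  calc |p.2| * bvnDensity σX σY ρ p.2 p.1
      ≤ |p.2| * (C * (Real.exp (-a * p.2 ^ 2) * Real.exp (-b * p.1 ^ 2))) := by
        apply mul_le_mul_of_nonneg_left _ (abs_nonneg _)
        rw [hC_def]
        calc bvnDensity σX σY ρ p.2 p.1
            ≤ (2 * π * σX * σY * Real.sqrt (1 - ρ ^ 2))⁻¹ *
              (Real.exp (-a * p.2 ^ 2) * Real.exp (-b * p.1 ^ 2)) := hbd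
          _ = _ := rfl
    _ ≤ |Real.exp (-b * p.1 ^ 2) * (C * (p.2 * Real.exp (-a * p.2 ^ 2)))| := by
        rw [abs_mul, abs_mul, abs_mul, abs_of_nonneg (Real.exp_nonneg _),
          abs_of_nonneg (Real.exp_nonneg _), abs_of_nonneg hC.le]
        ring_nf
        exact le_refl _

lemma bvnSwap (σX σY ρ : ℝ) (hX : 0 < σX) (hY : 0 < σY) (hρ : |ρ| < 1)
    (S : Set ℝ) (hS : MeasurableSet S) :
    ∫ y in S, ∫ x in Ioi (0:ℝ), x * bvnDensity σX σY ρ x y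
      = ∫ x in Ioi (0:ℝ), ∫ y in S, x * bvnDensity σX σY ρ x y := by
  apply integral_integral_swap
  rw [Measure.prod_restrict]
  exact (bvnIntegrable σX σY ρ hX hY hρ).integrableOn

-- inner integral over y on Iic w
lemma bvnIicInt (σX σY ρ : ℝ) (hX : 0 < σX) (hY : 0 < σY) (hρ : |ρ| < 1) (x w : ℝ) :
    ∫ y in Iic w, bvnDensity σX σY ρ x y
      = (σX * Real.sqrt (2 * π))⁻¹ * Real.exp (-x ^ 2 / (2 * σX ^ 2)) *
        stdNormalCDF ((w / σY - ρ * x / σX) / Real.sqrt (1 - ρ ^ 2)) := by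
  have h1 := one_sub_sq_pos hρ
  have hs : 0 < Real.sqrt (1 - ρ ^ 2) := Real.sqrt_pos.mpr h1
  simp_rw [bvnFactor σX σY ρ hX hY hρ x _]
  rw [integral_const_mul]
  congr 1
  have e : ∀ y : ℝ, (σY * Real.sqrt (1 - ρ ^ 2) * Real.sqrt (2 * π))⁻¹ *
      Real.exp (-((y / σY - ρ * x / σX) / Real.sqrt (1 - ρ ^ 2)) ^ 2 / 2)
      = (σY * Real.sqrt (1 - ρ ^ 2))⁻¹ * ((Real.sqrt (2 * π))⁻¹ *
        Real.exp (-((y / σY - ρ * x / σX) / Real.sqrt (1 - ρ ^ 2)) ^ 2 / 2)) := by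
    intro y; rw [mul_inv, mul_assoc]
  rw [show (fun y : ℝ => (σY * Real.sqrt (1 - ρ ^ 2) * Real.sqrt (2 * π))⁻¹ *
      Real.exp (-((y / σY - ρ * x / σX) / Real.sqrt (1 - ρ ^ 2)) ^ 2 / 2)) = fun y : ℝ =>
      (σY * Real.sqrt (1 - ρ ^ 2))⁻¹ * ((Real.sqrt (2 * π))⁻¹ *
        Real.exp (-((y / σY - ρ * x / σX) / Real.sqrt (1 - ρ ^ 2)) ^ 2 / 2)) from funext e]
  rw [integral_const_mul, intGaussIic w (ρ * x / σX) hY hs, ← mul_assoc,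
    inv_mul_cancel₀ (by positivity), one_mul]

lemma bvnLineInt (σX σY ρ : ℝ) (hX : 0 < σX) (hY : 0 < σY) (hρ : |ρ| < 1) (x : ℝ) :
    ∫ y : ℝ, bvnDensity σX σY ρ x y
      = (σX * Real.sqrt (2 * π))⁻¹ * Real.exp (-x ^ 2 / (2 * σX ^ 2)) := by
  have h1 := one_sub_sq_pos hρ
  have hs : 0 < Real.sqrt (1 - ρ ^ 2) := Real.sqrt_pos.mpr h1
  have h2π : (0:ℝ) < 2 * π := by positivity
  simp_rw [bvnFactor σX σY ρ hX hY hρ x _]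
  rw [integral_const_mul, integral_const_mul, intGaussLine (ρ * x / σX) hY hs]
  rw [show ((σY * Real.sqrt (1 - ρ ^ 2) * Real.sqrt (2 * π))⁻¹ *
      (σY * Real.sqrt (1 - ρ ^ 2) * Real.sqrt (2 * π))) = 1 from
    inv_mul_cancel₀ (by positivity), mul_one]

/-- Lemma 5.2 (specialized): for zero-mean jointly Gaussian `(X,Y)` with correlation `ρ`,
the probability measure `A ↦ E[X⁺·1{Y ∈ A}]/E[X⁺]` is the law of
`σ_Y(ρ·R⁺ + √(1-ρ²)·U)` with `R⁺` Rayleigh and `U` standard normal independent.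
Expressed as equality of CDFs: the right-hand side is
`P(σY(ρR⁺+√(1-ρ²)U) ≤ w) = ∫_0^∞ r e^{-r²/2} Φ((w/σY - ρr)/√(1-ρ²)) dr`. -/
theorem stmt7 (σX σY ρ : ℝ) (hX : 0 < σX) (hY : 0 < σY) (hρ : |ρ| < 1) (w : ℝ) :
    (∫ y in Set.Iic w, ∫ x in Set.Ioi (0 : ℝ), x * bvnDensity σX σY ρ x y) /
      (∫ y : ℝ, ∫ x in Set.Ioi (0 : ℝ), x * bvnDensity σX σY ρ x y) =
      ∫ r in Set.Ioi (0 : ℝ),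
        r * Real.exp (-r ^ 2 / 2) *
          stdNormalCDF ((w / σY - ρ * r) / Real.sqrt (1 - ρ ^ 2)) := by
  have h1 := one_sub_sq_pos hρ
  have hs : 0 < Real.sqrt (1 - ρ ^ 2) := Real.sqrt_pos.mpr h1
  have h2π : (0:ℝ) < 2 * π := by positivity
  have hsq : 0 < Real.sqrt (2 * π) := Real.sqrt_pos.mpr h2π
  set G : ℝ → ℝ := fun x => x * ((σX * Real.sqrt (2 * π))⁻¹ * Real.exp (-x ^ 2 / (2 * σX ^ 2)) *
    stdNormalCDF ((w / σY - ρ * x / σX) / Real.sqrt (1 - ρ ^ 2))) with hG_def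
  have hnum : (∫ y in Set.Iic w, ∫ x in Set.Ioi (0 : ℝ), x * bvnDensity σX σY ρ x y)
      = (σX * (Real.sqrt (2 * π))⁻¹) *
        ∫ r in Set.Ioi (0 : ℝ), r * Real.exp (-r ^ 2 / 2) *
          stdNormalCDF ((w / σY - ρ * r) / Real.sqrt (1 - ρ ^ 2)) := by
    rw [bvnSwap σX σY ρ hX hY hρ (Iic w) measurableSet_Iic]
    have step1 : ∀ x : ℝ, (∫ y in Iic w, x * bvnDensity σX σY ρ x y) = G x := by
      intro x
      rw [integral_const_mul, bvnIicInt σX σY ρ hX hY hρ x w]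
    simp_rw [step1]
    have sub := integral_comp_mul_left_Ioi G 0 hX
    rw [mul_zero] at sub
    have hGe : ∀ r : ℝ, G (σX * r) = (Real.sqrt (2 * π))⁻¹ *
        (r * Real.exp (-r ^ 2 / 2) *
          stdNormalCDF ((w / σY - ρ * r) / Real.sqrt (1 - ρ ^ 2))) := by
      intro r
      have e1 : -(σX * r) ^ 2 / (2 * σX ^ 2) = -r ^ 2 / 2 := by
        field_simp
      have e2 : ρ * (σX * r) / σX = ρ * r := by
        field_simp
      rw [hG_def]
      simp only [e1, e2]
      field_simp
    have key : ∫ x in Ioi (0:ℝ), G x = σX * ∫ r in Ioi (0:ℝ), G (σX * r) := by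
      rw [sub, smul_eq_mul, ← mul_assoc, mul_inv_cancel₀ hX.ne', one_mul]
    rw [key]
    simp_rw [hGe]
    rw [integral_const_mul]
    ring
  have hden : (∫ y : ℝ, ∫ x in Set.Ioi (0 : ℝ), x * bvnDensity σX σY ρ x y)
      = σX * (Real.sqrt (2 * π))⁻¹ := by
    rw [← setIntegral_univ]
    rw [bvnSwap σX σY ρ hX hY hρ univ MeasurableSet.univ]
    have step1 : ∀ x : ℝ, (∫ y in (univ : Set ℝ), x * bvnDensity σX σY ρ x y)
        = (σX * Real.sqrt (2 * π))⁻¹ * (x * Real.exp (-x ^ 2 / (2 * σX ^ 2))) := by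
      intro x
      rw [setIntegral_univ, integral_const_mul, bvnLineInt σX σY ρ hX hY hρ x]
      ring
    simp_rw [step1]
    rw [integral_const_mul]
    have e3 : ∀ x : ℝ, -x ^ 2 / (2 * σX ^ 2) = -(2 * σX ^ 2)⁻¹ * x ^ 2 := by
      intro x; field_simp
    simp_rw [e3]
    rw [intXGauss (by positivity : (0:ℝ) < (2 * σX ^ 2)⁻¹)]
    have e4 : (2 * (2 * σX ^ 2)⁻¹)⁻¹ = σX ^ 2 := by
      rw [inv_eq_iff_eq_inv]
      field_simp
    rw [e4]
    field_simp
  rw [hnum, hden]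
  exact mul_div_cancel_left₀ _ (by positivity)
end

section
/- Let (X, T) be zero-mean jointly Gaussian with Var(X) = λ₂₀ > 0, Var(T) = λ₀₂, Cov(X, T) = λ₁₁, and λ₂₀λ₀₂ - λ₁₁² > 0. Define V = -T/X (on {X ≠ 0}) and the Palm distribution F_V(v) = E[X⁻·1{V ≤ v}]/E[X⁻]. Then F_V(v) = (1/2)(1 + (v - v̄)/√((v - v̄)² + σ²/λ₂₀)), where v̄ = -λ₁₁/λ₂₀ and σ² = λ₀₂ - λ₁₁²/λ₂₀. -/
open MeasureTheory Real Set Filter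
open scoped Pointwise

namespace Stmt11Aux

lemma gauss_Iic {a : ℝ} (ha : 0 < a) :
    ∫ x in Iic (0:ℝ), Real.exp (-a * x ^ 2) = Real.sqrt (π / a) / 2 := by
  have h := integral_comp_neg_Iic (0:ℝ) (fun x => Real.exp (-a * x ^ 2))
  simp only [neg_sq, neg_zero] at h
  rw [h, integral_gaussian_Ioi]

lemma integrable_sq_mul_exp {a : ℝ} (ha : 0 < a) :
    Integrable fun x : ℝ => x ^ 2 * Real.exp (-a * x ^ 2) := by
  have h := integrable_rpow_mul_exp_neg_mul_sq ha (by norm_num : (-1:ℝ) < 2)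
  have : ∀ x : ℝ, x ^ (2:ℝ) = x ^ (2:ℕ) := fun x => by
    rw [show (2:ℝ) = ((2:ℕ):ℝ) by norm_num, Real.rpow_natCast]
  simpa only [this] using h

lemma tendsto_mul_exp_atBot {a : ℝ} (ha : 0 < a) :
    Tendsto (fun x : ℝ => x * Real.exp (-a * x ^ 2)) atBot (nhds 0) := by
  have h1 : Tendsto (fun x : ℝ => x ^ (1:ℝ) * Real.exp (-a * x ^ 2)) atTop (nhds 0) := by
    refine (rpow_mul_exp_neg_mul_sq_isLittleO_exp_neg ha 1).isBigO.trans_tendsto ?_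
    have : Tendsto (fun x : ℝ => -(1/2) * x) atTop atBot :=
      Tendsto.const_mul_atTop_of_neg (by norm_num) tendsto_id
    exact Real.tendsto_exp_atBot.comp this
  have h2 : Tendsto (fun x : ℝ => x * Real.exp (-a * x ^ 2)) atTop (nhds 0) := by
    refine h1.congr' ?_
    filter_upwards [eventually_gt_atTop (0:ℝ)] with x hx
    rw [Real.rpow_one]
  have h3 := h2.comp tendsto_neg_atBot_atTop
  have : (fun x : ℝ => (-x) * Real.exp (-a * (-x) ^ 2)) =
      fun x : ℝ => -(x * Real.exp (-a * x ^ 2)) := by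
    ext x; rw [neg_sq]; ring
  rw [Function.comp_def] at h3
  rw [this] at h3
  simpa using h3.neg

lemma int_negx_Iic {a : ℝ} (ha : 0 < a) :
    ∫ x in Iic (0:ℝ), (-x) * Real.exp (-a * x ^ 2) = 1 / (2 * a) := by
  have hderiv : ∀ x ∈ Iic (0:ℝ), HasDerivAt (fun x : ℝ => Real.exp (-a * x ^ 2) / (2 * a))
      ((-x) * Real.exp (-a * x ^ 2)) x := by
    intro x _
    have h1 : HasDerivAt (fun x : ℝ => -a * x ^ 2) (-a * (2 * x)) x := by
      simpa using ((hasDerivAt_pow 2 x).const_mul (-a))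
    have h2 := (Real.hasDerivAt_exp (-a * x ^ 2)).comp x h1
    have h3 := h2.div_const (2 * a)
    refine h3.congr_deriv ?_
    field_simp
  have f'int : IntegrableOn (fun x : ℝ => (-x) * Real.exp (-a * x ^ 2)) (Iic (0:ℝ)) := by
    have := (integrable_mul_exp_neg_mul_sq ha).neg
    simpa [neg_mul] using this.integrableOn
  have htend : Tendsto (fun x : ℝ => Real.exp (-a * x ^ 2) / (2 * a)) atBot (nhds 0) := by
    have h1 : Tendsto (fun x : ℝ => -a * x ^ 2) atBot atBot := by
      have : Tendsto (fun x : ℝ => x ^ 2) atBot atTop := by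
        have := (tendsto_pow_atTop (two_ne_zero)).comp tendsto_neg_atBot_atTop (α := ℝ)
        rw [Function.comp_def] at this
        simpa only [neg_sq] using this
      exact Tendsto.const_mul_atTop_of_neg (neg_neg_iff_pos.mpr ha) this
    have := Real.tendsto_exp_atBot.comp h1
    simpa using this.div_const (2 * a)
  have := integral_Iic_of_hasDerivAt_of_tendsto' hderiv f'int htend
  rw [this]
  simp [Real.exp_zero]

lemma int_sq_Iic {a : ℝ} (ha : 0 < a) :
    ∫ x in Iic (0:ℝ), x ^ 2 * Real.exp (-a * x ^ 2) = Real.sqrt (π / a) / (4 * a) := by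
  have gauss := gauss_Iic ha
  have tendmul := tendsto_mul_exp_atBot ha
  have hderiv : ∀ x ∈ Iic (0:ℝ), HasDerivAt (fun x : ℝ => -x * Real.exp (-a * x ^ 2) / (2 * a))
      (x ^ 2 * Real.exp (-a * x ^ 2) - Real.exp (-a * x ^ 2) / (2 * a)) x := by
    intro x _
    have h1 : HasDerivAt (fun x : ℝ => -a * x ^ 2) (-a * (2 * x)) x := by
      simpa using ((hasDerivAt_pow 2 x).const_mul (-a))
    have h2 := (Real.hasDerivAt_exp (-a * x ^ 2)).comp x h1
    have h3 : HasDerivAt (fun x : ℝ => -x) (-1) x := (hasDerivAt_id x).neg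
    have h4 := (h3.mul h2).div_const (2 * a)
    refine h4.congr_deriv ?_
    simp only [Function.comp_apply]
    field_simp
    ring
  have hint1 := integrable_sq_mul_exp ha
  have hint2 := integrable_exp_neg_mul_sq ha
  have f'int : IntegrableOn
      (fun x : ℝ => x ^ 2 * Real.exp (-a * x ^ 2) - Real.exp (-a * x ^ 2) / (2 * a))
      (Iic (0:ℝ)) := (hint1.sub (hint2.div_const _)).integrableOn
  have htend : Tendsto (fun x : ℝ => -x * Real.exp (-a * x ^ 2) / (2 * a)) atBot (nhds 0) := by
    have := (tendmul.neg).div_const (2 * a)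
    simpa [neg_mul] using this
  have key := integral_Iic_of_hasDerivAt_of_tendsto' hderiv f'int htend
  simp only [neg_zero, zero_mul, zero_div, sub_zero] at key
  have hsplit : ∫ x in Iic (0:ℝ),
      (x ^ 2 * Real.exp (-a * x ^ 2) - Real.exp (-a * x ^ 2) / (2 * a))
      = (∫ x in Iic (0:ℝ), x ^ 2 * Real.exp (-a * x ^ 2))
        - ∫ x in Iic (0:ℝ), Real.exp (-a * x ^ 2) / (2 * a) :=
    integral_sub hint1.integrableOn (hint2.div_const _).integrableOn
  rw [hsplit] at key
  have h5 : ∫ x in Iic (0:ℝ), Real.exp (-a * x ^ 2) / (2 * a)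
      = (∫ x in Iic (0:ℝ), Real.exp (-a * x ^ 2)) / (2 * a) := integral_div _ _
  rw [h5, gauss] at key
  have : (∫ x in Iic (0:ℝ), x ^ 2 * Real.exp (-a * x ^ 2)) = Real.sqrt (π / a) / 2 / (2 * a) := by
    linarith
  rw [this]
  ring

lemma cont_pal {c m : ℝ} (hc : 0 < c) :
    Continuous fun s : ℝ => ((s - m) ^ 2 + c)⁻¹ / Real.sqrt ((s - m) ^ 2 + c) := by
  have hpos : ∀ s : ℝ, 0 < (s - m) ^ 2 + c := fun s => by positivity
  apply Continuous.div
  · exact (((continuous_id.sub continuous_const).pow 2).add continuous_const).inv₀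
      fun s => (hpos s).ne'
  · exact Real.continuous_sqrt.comp (((continuous_id.sub continuous_const).pow 2).add
      continuous_const)
  · exact fun s => (Real.sqrt_pos.mpr (hpos s)).ne'

lemma integrable_pal {c : ℝ} (m : ℝ) (hc : 0 < c) :
    Integrable fun s : ℝ => ((s - m) ^ 2 + c)⁻¹ / Real.sqrt ((s - m) ^ 2 + c) := by
  have hsc : Real.sqrt c ≠ 0 := (Real.sqrt_pos.mpr hc).ne'
  have base : Integrable fun x : ℝ => (1 + x ^ 2)⁻¹ := integrable_inv_one_add_sq
  have b2 : Integrable fun x : ℝ => (1 + (x / Real.sqrt c) ^ 2)⁻¹ := by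
    have := base.comp_div (R := Real.sqrt c) hsc
    simpa using this
  have b3 : Integrable fun s : ℝ => (1 + ((s - m) / Real.sqrt c) ^ 2)⁻¹ :=
    b2.comp_sub_right m
  have b4 : Integrable fun s : ℝ =>
      (Real.sqrt c)⁻¹ * (c⁻¹ * (1 + ((s - m) / Real.sqrt c) ^ 2)⁻¹) :=
    (b3.const_mul _).const_mul _
  refine b4.mono' (cont_pal hc).aestronglyMeasurable ?_
  refine Filter.Eventually.of_forall fun s => ?_
  have hpos : 0 < (s - m) ^ 2 + c := by positivity
  have hsq : Real.sqrt c ^ 2 = c := Real.sq_sqrt hc.le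
  have heq : c⁻¹ * (1 + ((s - m) / Real.sqrt c) ^ 2)⁻¹ = ((s - m) ^ 2 + c)⁻¹ := by
    rw [div_pow, hsq]
    field_simp
    ring
  rw [heq, Real.norm_eq_abs, abs_of_nonneg (by positivity), div_eq_mul_inv,
    mul_comm ((Real.sqrt c)⁻¹) _]
  refine mul_le_mul_of_nonneg_left ?_ (by positivity)
  exact inv_anti₀ (Real.sqrt_pos.mpr hc) (Real.sqrt_le_sqrt (by nlinarith [sq_nonneg (s - m)]))

lemma tendsto_ratio_atBot {c : ℝ} (m : ℝ) (hc : 0 < c) :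
    Tendsto (fun s : ℝ => (s - m) / Real.sqrt ((s - m) ^ 2 + c)) atBot (nhds (-1)) := by
  have hsq : Tendsto (fun u : ℝ => u ^ 2) atBot atTop := by
    have := (tendsto_pow_atTop (two_ne_zero)).comp tendsto_neg_atBot_atTop (α := ℝ)
    rw [Function.comp_def] at this
    simpa only [neg_sq] using this
  have h2 : Tendsto (fun u : ℝ => c / u ^ 2) atBot (nhds 0) :=
    Tendsto.div_atTop tendsto_const_nhds hsq
  have h3 : Tendsto (fun u : ℝ => 1 + c / u ^ 2) atBot (nhds 1) := by
    simpa using tendsto_const_nhds.add h2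
  have h4 : Tendsto (fun u : ℝ => Real.sqrt (1 + c / u ^ 2)) atBot (nhds 1) := by
    have := (Real.continuous_sqrt.tendsto 1).comp h3
    simpa [Function.comp_def] using this
  have h5 : Tendsto (fun u : ℝ => -(Real.sqrt (1 + c / u ^ 2))⁻¹) atBot (nhds (-1)) := by
    simpa using (h4.inv₀ one_ne_zero).neg
  have h6 : Tendsto (fun u : ℝ => u / Real.sqrt (u ^ 2 + c)) atBot (nhds (-1)) := by
    refine h5.congr' ?_
    filter_upwards [eventually_lt_atBot (0:ℝ)] with u hu
    have hune : u ≠ 0 := hu.ne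
    have hkey : u ^ 2 + c = (-u) ^ 2 * (1 + c / u ^ 2) := by
      field_simp
    have hw : (0:ℝ) < Real.sqrt (1 + c / u ^ 2) := Real.sqrt_pos.mpr (by positivity)
    rw [hkey, Real.sqrt_mul (sq_nonneg _), Real.sqrt_sq (by linarith : (0:ℝ) ≤ -u)]
    rw [div_mul_eq_div_div]
    rw [show u / -u = -1 by field_simp]
    field_simp
  have h7 : Tendsto (fun s : ℝ => s - m) atBot atBot := tendsto_atBot_add_const_right _ _ tendsto_id
  exact h6.comp h7

lemma int_pal {c : ℝ} (m v : ℝ) (hc : 0 < c) :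
    ∫ s in Iic v, ((s - m) ^ 2 + c)⁻¹ / Real.sqrt ((s - m) ^ 2 + c)
      = ((v - m) / Real.sqrt ((v - m) ^ 2 + c) + 1) / c := by
  have hderiv : ∀ s ∈ Iic v,
      HasDerivAt (fun s : ℝ => (s - m) / Real.sqrt ((s - m) ^ 2 + c) / c)
        (((s - m) ^ 2 + c)⁻¹ / Real.sqrt ((s - m) ^ 2 + c)) s := by
    intro s _
    have hX : (0:ℝ) < (s - m) ^ 2 + c := by positivity
    have hs0 : Real.sqrt ((s - m) ^ 2 + c) ≠ 0 := (Real.sqrt_pos.mpr hX).ne'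
    have hnum : HasDerivAt (fun s : ℝ => s - m) 1 s := (hasDerivAt_id s).sub_const m
    have hinner : HasDerivAt (fun s : ℝ => (s - m) ^ 2 + c) (2 * (s - m)) s := by
      simpa using (hnum.pow 2).add_const c
    have hden : HasDerivAt (fun s : ℝ => Real.sqrt ((s - m) ^ 2 + c))
        (1 / (2 * Real.sqrt ((s - m) ^ 2 + c)) * (2 * (s - m))) s :=
      (Real.hasDerivAt_sqrt hX.ne').comp s hinner
    have h := (hnum.div hden hs0).div_const c
    refine h.congr_deriv ?_
    symm
    have hw2 : Real.sqrt ((s - m) ^ 2 + c) ^ 2 = (s - m) ^ 2 + c := Real.sq_sqrt hX.le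
    set w := Real.sqrt ((s - m) ^ 2 + c) with hwdef
    have e1 : 1 * w - (s - m) * (1 / (2 * w) * (2 * (s - m))) = c / w := by
      rw [eq_div_iff hs0]
      field_simp
      linear_combination hw2
    rw [e1, hw2, div_div, div_div, eq_div_iff (by positivity : w * (((s - m) ^ 2 + c) * c) ≠ 0)]
    field_simp
  have f'int : IntegrableOn
      (fun s : ℝ => ((s - m) ^ 2 + c)⁻¹ / Real.sqrt ((s - m) ^ 2 + c)) (Iic v) :=
    (integrable_pal m hc).integrableOn
  have htend : Tendsto (fun s : ℝ => (s - m) / Real.sqrt ((s - m) ^ 2 + c) / c)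
      atBot (nhds (-1 / c)) := by
    simpa using (tendsto_ratio_atBot m hc).div_const c
  have key := integral_Iic_of_hasDerivAt_of_tendsto' hderiv f'int htend
  rw [key]
  field_simp
  ring

lemma subst_t (R vv : ℝ) (hR : 0 < R) (g : ℝ → ℝ) :
    ∫ t in Iic (R * vv), g t = R * ∫ s in Iic vv, g (R * s) := by
  have h := MeasureTheory.Measure.setIntegral_comp_smul_of_pos (μ := volume) g (Iic vv) hR
  have hset : R • Iic vv = Iic (R * vv) := LinearOrderedField.smul_Iic hR
  rw [hset] at h
  simp only [smul_eq_mul, Module.finrank_self, pow_one] at h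
  rw [h]
  field_simp

end Stmt11Aux

open Stmt11Aux

set_option maxHeartbeats 1600000 in
/-- The distribution of wave velocities (Section 4). Let `(X,T)` be zero-mean jointly
Gaussian with `Var X = λ₂₀`, `Var T = λ₀₂`, `Cov(X,T) = λ₁₁` and joint density
`f(x,t) = (2π√D)⁻¹ exp(-(λ₀₂x² - 2λ₁₁xt + λ₂₀t²)/(2D))`, `D = λ₂₀λ₀₂ - λ₁₁²`.
With `V = -T/X`, the Palm distribution `F_V(v) = E[X⁻·1{V ≤ v}]/E[X⁻]` equals
`(1/2)(1 + (v - v̄)/√((v - v̄)² + σ²/λ₂₀))` with `v̄ = -λ₁₁/λ₂₀`, `σ² = λ₀₂ - λ₁₁²/λ₂₀`.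
On `{x < 0}`, `X⁻ = -x` and the event `{-t/x ≤ v}` is `{t ≤ -v·x}`. -/
theorem stmt11 (l20 l02 l11 v : ℝ) (h20 : 0 < l20) (hD : 0 < l20 * l02 - l11 ^ 2) :
    (∫ x in Set.Iio (0 : ℝ), (-x) *
        ∫ t in Set.Iic (-v * x),
          (2 * Real.pi * Real.sqrt (l20 * l02 - l11 ^ 2))⁻¹ *
            Real.exp (-(l02 * x ^ 2 - 2 * l11 * x * t + l20 * t ^ 2) /
              (2 * (l20 * l02 - l11 ^ 2)))) /
      (∫ x in Set.Iio (0 : ℝ), (-x) *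
        ∫ t : ℝ,
          (2 * Real.pi * Real.sqrt (l20 * l02 - l11 ^ 2))⁻¹ *
            Real.exp (-(l02 * x ^ 2 - 2 * l11 * x * t + l20 * t ^ 2) /
              (2 * (l20 * l02 - l11 ^ 2)))) =
      (1 / 2) * (1 + (v - (-l11 / l20)) /
        Real.sqrt ((v - (-l11 / l20)) ^ 2 + (l02 - l11 ^ 2 / l20) / l20)) := by
  have hl20 : l20 ≠ 0 := h20.ne'
  set D := l20 * l02 - l11 ^ 2 with hDdef
  have hDne : D ≠ 0 := hD.ne'
  set C := (2 * π * Real.sqrt D)⁻¹ with hCdef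
  have hCpos : 0 < C := by
    rw [hCdef]
    have := Real.sqrt_pos.mpr hD
    positivity
  set m := -l11 / l20 with hmdef
  set c := (l02 - l11 ^ 2 / l20) / l20 with hcdef
  have hcD : c = D / l20 ^ 2 := by rw [hcdef, hDdef]; field_simp
  have hc : 0 < c := by rw [hcD]; positivity
  set K0 := C * Real.sqrt (2 * π * D / l20) with hK0def
  have hK0pos : 0 < K0 := by
    rw [hK0def]
    have : 0 < 2 * π * D / l20 := by positivity
    have := Real.sqrt_pos.mpr this
    positivity
  -- pointwise exponent identities
  have hq : ∀ x s : ℝ, -(l02 * x ^ 2 - 2 * l11 * x * (-x * s) + l20 * (-x * s) ^ 2) / (2 * D)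
      = -(x ^ 2 * l20 / (2 * D)) * ((s - m) ^ 2 + c) := by
    intro x s
    rw [hmdef, hcdef, hDdef]
    field_simp
    ring
  have hcomp : ∀ x t : ℝ, -(l02 * x ^ 2 - 2 * l11 * x * t + l20 * t ^ 2) / (2 * D)
      = -(2 * l20)⁻¹ * x ^ 2 + -(l20 / (2 * D)) * (t - l11 / l20 * x) ^ 2 := by
    intro x t
    field_simp
    rw [hDdef]
    ring
  -- full-line t integral
  have hfull_t : ∀ x : ℝ,
      (∫ t : ℝ, C * Real.exp (-(l02 * x ^ 2 - 2 * l11 * x * t + l20 * t ^ 2) / (2 * D)))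
      = K0 * Real.exp (-(2 * l20)⁻¹ * x ^ 2) := by
    intro x
    have h1 : ∀ t : ℝ, C * Real.exp (-(l02 * x ^ 2 - 2 * l11 * x * t + l20 * t ^ 2) / (2 * D))
        = (C * Real.exp (-(2 * l20)⁻¹ * x ^ 2)) *
          Real.exp (-(l20 / (2 * D)) * (t - l11 / l20 * x) ^ 2) := by
      intro t
      rw [hcomp x t, Real.exp_add]
      ring
    simp_rw [h1]
    rw [integral_const_mul]
    have h2 : (∫ t : ℝ, Real.exp (-(l20 / (2 * D)) * (t - l11 / l20 * x) ^ 2))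
        = ∫ t : ℝ, Real.exp (-(l20 / (2 * D)) * t ^ 2) := by
      simp_rw [sub_eq_add_neg]
      exact integral_add_right_eq_self
        (fun t => Real.exp (-(l20 / (2 * D)) * t ^ 2)) (-(l11 / l20 * x))
    rw [h2, integral_gaussian]
    have h3 : π / (l20 / (2 * D)) = 2 * π * D / l20 := by field_simp
    rw [h3, hK0def]
    ring
  -- denominator
  have hDen : (∫ x in Iio (0:ℝ), (-x) *
      ∫ t : ℝ, C * Real.exp (-(l02 * x ^ 2 - 2 * l11 * x * t + l20 * t ^ 2) / (2 * D)))
      = K0 * l20 := by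
    have h1 : ∀ x : ℝ, (-x) *
        (∫ t : ℝ, C * Real.exp (-(l02 * x ^ 2 - 2 * l11 * x * t + l20 * t ^ 2) / (2 * D)))
        = K0 * ((-x) * Real.exp (-(2 * l20)⁻¹ * x ^ 2)) := by
      intro x
      rw [hfull_t x]
      ring
    simp_rw [h1]
    rw [integral_const_mul, ← integral_Iic_eq_integral_Iio,
      int_negx_Iic (by positivity : (0:ℝ) < (2 * l20)⁻¹)]
    field_simp
  -- numerator: substitution t = (-x) s
  set F : ℝ → ℝ → ℝ := fun x s =>
    x ^ 2 * (C * Real.exp (-(x ^ 2 * l20 / (2 * D)) * ((s - m) ^ 2 + c))) with hFdef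
  have hNum1 : (∫ x in Iio (0:ℝ), (-x) *
      ∫ t in Iic (-v * x), C * Real.exp (-(l02 * x ^ 2 - 2 * l11 * x * t + l20 * t ^ 2) / (2 * D)))
      = ∫ x in Iio (0:ℝ), ∫ s in Iic v, F x s := by
    refine setIntegral_congr_fun measurableSet_Iio fun x hx => ?_
    have hxneg : x < 0 := hx
    have hR : 0 < -x := by linarith
    have hs := subst_t (-x) v hR
      (fun t => C * Real.exp (-(l02 * x ^ 2 - 2 * l11 * x * t + l20 * t ^ 2) / (2 * D)))
    rw [show -v * x = -x * v by ring, hs, ← mul_assoc, neg_mul_neg, ← sq, ← integral_const_mul]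
    refine setIntegral_congr_fun measurableSet_Iic fun s _ => ?_
    rw [hFdef]
    simp only
    rw [hq x s]
  -- integrability for Fubini
  have hFc : Continuous (Function.uncurry F) := by
    rw [hFdef]
    apply Continuous.mul
    · exact (continuous_fst.pow 2)
    · apply Continuous.mul continuous_const
      apply Real.continuous_exp.comp
      apply Continuous.mul
      · exact ((continuous_fst.pow 2).mul continuous_const).div_const _ |>.neg
      · exact ((continuous_snd.sub continuous_const).pow 2).add continuous_const
  have hF_int_s : ∀ x : ℝ, x ≠ 0 → Integrable (fun s => F x s) := by
    intro x hx
    have hb : 0 < x ^ 2 * l20 / (2 * D) := by positivity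
    have h1 : (fun s => F x s) = fun s =>
        (x ^ 2 * C * Real.exp (-(x ^ 2 * l20 / (2 * D)) * c)) *
          Real.exp (-(x ^ 2 * l20 / (2 * D)) * (s - m) ^ 2) := by
      ext s
      rw [hFdef]
      simp only
      rw [show -(x ^ 2 * l20 / (2 * D)) * ((s - m) ^ 2 + c)
        = -(x ^ 2 * l20 / (2 * D)) * c + -(x ^ 2 * l20 / (2 * D)) * (s - m) ^ 2 by ring,
        Real.exp_add]
      ring
    rw [h1]
    exact ((integrable_exp_neg_mul_sq hb).comp_sub_right m).const_mul _
  have hbc : ∀ x : ℝ, (x ^ 2 * l20 / (2 * D)) * c = (2 * l20)⁻¹ * x ^ 2 := by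
    intro x
    rw [hcD]
    field_simp
  have hfull_s : ∀ x : ℝ, x < 0 → (∫ s : ℝ, F x s)
      = K0 * ((-x) * Real.exp (-(2 * l20)⁻¹ * x ^ 2)) := by
    intro x hx
    have hxne : x ≠ 0 := hx.ne
    have hb : 0 < x ^ 2 * l20 / (2 * D) := by positivity
    have h1 : (fun s => F x s) = fun s =>
        (x ^ 2 * C * Real.exp (-(x ^ 2 * l20 / (2 * D)) * c)) *
          Real.exp (-(x ^ 2 * l20 / (2 * D)) * (s - m) ^ 2) := by
      ext s
      rw [hFdef]
      simp only
      rw [show -(x ^ 2 * l20 / (2 * D)) * ((s - m) ^ 2 + c)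
        = -(x ^ 2 * l20 / (2 * D)) * c + -(x ^ 2 * l20 / (2 * D)) * (s - m) ^ 2 by ring,
        Real.exp_add]
      ring
    rw [h1, integral_const_mul]
    have h2 : (∫ s : ℝ, Real.exp (-(x ^ 2 * l20 / (2 * D)) * (s - m) ^ 2))
        = ∫ s : ℝ, Real.exp (-(x ^ 2 * l20 / (2 * D)) * s ^ 2) := by
      simp_rw [sub_eq_add_neg]
      exact integral_add_right_eq_self
        (fun s => Real.exp (-(x ^ 2 * l20 / (2 * D)) * s ^ 2)) (-m)
    rw [h2, integral_gaussian]
    have h3 : π / (x ^ 2 * l20 / (2 * D)) = (2 * π * D / l20) * ((-x) * (-x))⁻¹ := by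
      field_simp
    rw [h3, Real.sqrt_mul (by positivity), Real.sqrt_inv,
      Real.sqrt_mul_self (by linarith : (0:ℝ) ≤ -x)]
    rw [show -(x ^ 2 * l20 / (2 * D)) * c = -(2 * l20)⁻¹ * x ^ 2 by linear_combination -hbc x,
      hK0def]
    have hxne' : -x ≠ 0 := by intro h; apply hxne; linarith
    field_simp
  have hF_nonneg : ∀ x s : ℝ, 0 ≤ F x s := by
    intro x s
    rw [hFdef]
    positivity
  have hG2int : Integrable (fun x : ℝ => K0 * ((-x) * Real.exp (-(2 * l20)⁻¹ * x ^ 2)))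
      (volume.restrict (Iio 0)) := by
    have base : Integrable fun x : ℝ => x * Real.exp (-(2 * l20)⁻¹ * x ^ 2) :=
      integrable_mul_exp_neg_mul_sq (by positivity : (0:ℝ) < (2 * l20)⁻¹)
    have h := base.const_mul (-K0)
    refine (h.congr ?_).integrableOn
    refine Filter.Eventually.of_forall fun x => ?_
    ring
  have hFubInt : Integrable (Function.uncurry F)
      ((volume.restrict (Iio (0:ℝ))).prod (volume.restrict (Iic v))) := by
    have hmeas : AEStronglyMeasurable (Function.uncurry F)
        ((volume.restrict (Iio (0:ℝ))).prod (volume.restrict (Iic v))) :=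
      hFc.aestronglyMeasurable
    refine (integrable_prod_iff hmeas).mpr ⟨?_, ?_⟩
    · filter_upwards [ae_restrict_mem measurableSet_Iio] with x hx
      exact (hF_int_s x (show x ≠ 0 from (show x < 0 from hx).ne)).restrict
    · refine hG2int.mono' (hmeas.norm.integral_prod_right') ?_
      filter_upwards [ae_restrict_mem measurableSet_Iio] with x hx
      have hxlt : x < 0 := hx
      simp only [Function.uncurry_apply_pair]
      have e : (∫ y in Iic v, ‖F x y‖) = ∫ y in Iic v, F x y :=
        integral_congr_ae (Filter.Eventually.of_forall fun y => norm_of_nonneg (hF_nonneg x y))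
      rw [e]
      have hnn : 0 ≤ ∫ s in Iic v, F x s :=
        integral_nonneg fun s => hF_nonneg x s
      rw [norm_of_nonneg hnn]
      calc ∫ s in Iic v, F x s ≤ ∫ s : ℝ, F x s := by
            refine setIntegral_le_integral (hF_int_s x hxlt.ne) ?_
            exact Filter.Eventually.of_forall fun s => hF_nonneg x s
        _ = K0 * ((-x) * Real.exp (-(2 * l20)⁻¹ * x ^ 2)) := hfull_s x hxlt
  -- Fubini swap
  have hswap : (∫ x in Iio (0:ℝ), ∫ s in Iic v, F x s)
      = ∫ s in Iic v, ∫ x in Iio (0:ℝ), F x s := integral_integral_swap hFubInt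
  -- inner x integral
  have hinx : ∀ s : ℝ, (∫ x in Iio (0:ℝ), F x s)
      = K0 * (D / (2 * l20)) *
        (((s - m) ^ 2 + c)⁻¹ / Real.sqrt ((s - m) ^ 2 + c)) := by
    intro s
    have hX : (0:ℝ) < (s - m) ^ 2 + c := by positivity
    set X := (s - m) ^ 2 + c with hXdef
    have ha : (0:ℝ) < l20 * X / (2 * D) := by positivity
    have h1 : ∀ x : ℝ, F x s = C * (x ^ 2 * Real.exp (-(l20 * X / (2 * D)) * x ^ 2)) := by
      intro x
      rw [hFdef]
      simp only
      rw [show -(x ^ 2 * l20 / (2 * D)) * X = -(l20 * X / (2 * D)) * x ^ 2 by ring]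
      ring
    simp_rw [h1]
    rw [integral_const_mul, ← integral_Iic_eq_integral_Iio, int_sq_Iic ha]
    have hsX : Real.sqrt X ≠ 0 := (Real.sqrt_pos.mpr hX).ne'
    have h2 : π / (l20 * X / (2 * D)) = (2 * π * D / l20) * X⁻¹ := by
      field_simp
    rw [h2, Real.sqrt_mul (by positivity), Real.sqrt_inv]
    rw [hK0def]
    have h4 : Real.sqrt X * Real.sqrt X = X := Real.mul_self_sqrt hX.le
    field_simp
    ring
  -- numerator value
  have hNum : (∫ x in Iio (0:ℝ), (-x) *
      ∫ t in Iic (-v * x), C * Real.exp (-(l02 * x ^ 2 - 2 * l11 * x * t + l20 * t ^ 2) / (2 * D)))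
      = K0 * (D / (2 * l20)) *
        (((v - m) / Real.sqrt ((v - m) ^ 2 + c) + 1) / c) := by
    rw [hNum1, hswap]
    simp_rw [hinx]
    rw [integral_const_mul, int_pal m v hc]
  rw [hNum, hDen]
  have hBne : Real.sqrt ((v - m) ^ 2 + c) ≠ 0 := (Real.sqrt_pos.mpr (by positivity)).ne'
  have hcrel : D = c * l20 ^ 2 := by rw [hcD]; field_simp
  rw [hcrel]
  field_simp
  ring
end

section
/- Let R⁺ be Rayleigh (density r e^{-r²/2}, r > 0) and U standard normal, independent, and let ρ ∈ (-1, 1), λ > 0. Define Y = √λ(ρR⁺ + √(1-ρ²)U). Then for w < 0, P(Y ≤ w)/P(Y < 0) = (2/(1-ρ))·(Φ(w/√(λ(1-ρ²))) - ρ·e^{-w²/(2λ)}·Φ(ρw/√(λ(1-ρ²)))). -/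
open MeasureTheory Real Set Filter Topology

set_option maxHeartbeats 1000000

noncomputable def phi (t : ℝ) : ℝ := (Real.sqrt (2 * Real.pi))⁻¹ * Real.exp (-t ^ 2 / 2)

lemma phi_eq (t : ℝ) : phi t = (Real.sqrt (2 * Real.pi))⁻¹ * Real.exp (-(1/2) * t ^ 2) := by
  unfold phi; congr 1; ring

lemma phi_cont : Continuous phi := by
  apply Continuous.mul continuous_const
  exact Real.continuous_exp.comp (by continuity)

lemma phi_integrable : Integrable phi := by
  have : Integrable (fun t : ℝ => Real.exp (-(1/2:ℝ) * t ^ 2)) := integrable_exp_neg_mul_sq (by norm_num)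
  exact (this.const_mul (Real.sqrt (2 * Real.pi))⁻¹).congr
    (Filter.Eventually.of_forall fun t => (phi_eq t).symm)

lemma phi_nonneg (t : ℝ) : 0 ≤ phi t := by
  apply mul_nonneg (inv_nonneg.2 (Real.sqrt_nonneg _)) (Real.exp_pos _).le

lemma integral_phi : ∫ t, phi t = 1 := by
  have h : ∫ t : ℝ, Real.exp (-(1/2:ℝ) * t ^ 2) = Real.sqrt (Real.pi / (1/2)) :=
    integral_gaussian (1/2)
  have h2 : Real.sqrt (Real.pi / (1/2:ℝ)) = Real.sqrt (2 * Real.pi) := by norm_num; ring_nf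
  have hpos : (0:ℝ) < Real.sqrt (2 * Real.pi) :=
    Real.sqrt_pos.2 (by positivity)
  calc ∫ t, phi t = (Real.sqrt (2 * Real.pi))⁻¹ * ∫ t : ℝ, Real.exp (-(1/2:ℝ) * t ^ 2) := by
        rw [← integral_const_mul]; exact integral_congr_ae (Filter.Eventually.of_forall fun t => phi_eq t)
    _ = 1 := by rw [h, h2]; field_simp

lemma stdNormalCDF_eq (x : ℝ) : stdNormalCDF x = ∫ t in Set.Iic x, phi t := rfl

lemma stdNormalCDF_nonneg (x : ℝ) : 0 ≤ stdNormalCDF x := by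
  rw [stdNormalCDF_eq]
  exact setIntegral_nonneg measurableSet_Iic fun t _ => phi_nonneg t

lemma stdNormalCDF_le_one (x : ℝ) : stdNormalCDF x ≤ 1 := by
  rw [stdNormalCDF_eq, ← integral_phi]
  exact setIntegral_le_integral phi_integrable (Filter.Eventually.of_forall phi_nonneg)

lemma hasDerivAt_stdNormalCDF (x : ℝ) : HasDerivAt stdNormalCDF (phi x) x := by
  have key : ∀ y : ℝ, stdNormalCDF y = stdNormalCDF 0 + ∫ t in (0:ℝ)..y, phi t := by
    intro y
    have := intervalIntegral.integral_Iic_sub_Iic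
      (phi_integrable.integrableOn (s := Set.Iic 0)) (phi_integrable.integrableOn (s := Set.Iic y))
    rw [stdNormalCDF_eq, stdNormalCDF_eq]
    linarith
  have hd : HasDerivAt (fun y => stdNormalCDF 0 + ∫ t in (0:ℝ)..y, phi t) (phi x) x := by
    apply HasDerivAt.const_add
    exact intervalIntegral.integral_hasDerivAt_right
      (phi_integrable.intervalIntegrable)
      phi_cont.stronglyMeasurable.stronglyMeasurableAtFilter
      phi_cont.continuousAt
  exact hd.congr_of_eventuallyEq (Filter.Eventually.of_forall key)

lemma stdNormalCDF_tendsto_one : Tendsto stdNormalCDF atTop (𝓝 1) := by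
  rw [← integral_phi]
  exact (aecover_Iic tendsto_id).integral_tendsto_of_countably_generated phi_integrable

lemma stdNormalCDF_cont : Continuous stdNormalCDF :=
  continuous_iff_continuousAt.2 fun x => (hasDerivAt_stdNormalCDF x).continuousAt

lemma stdNormalCDF_neg (x : ℝ) : stdNormalCDF (-x) = 1 - stdNormalCDF x := by
  have h1 : stdNormalCDF (-x) = ∫ t in Ioi x, phi t := by
    rw [stdNormalCDF_eq, ← integral_comp_neg_Ioi]
    refine setIntegral_congr_fun measurableSet_Ioi fun t _ => ?_
    unfold phi; ring_nf
  have h2 : stdNormalCDF x + ∫ t in Ioi x, phi t = 1 := by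
    rw [stdNormalCDF_eq, ← integral_phi,
      ← setIntegral_union (Iic_disjoint_Ioi le_rfl) measurableSet_Ioi
        phi_integrable.integrableOn phi_integrable.integrableOn, Iic_union_Ioi,
      setIntegral_univ]
  linarith

lemma stdNormalCDF_zero : stdNormalCDF 0 = 1/2 := by
  have := stdNormalCDF_neg 0
  rw [neg_zero] at this; linarith

lemma gaussTail (m σ : ℝ) (hσ : 0 < σ) :
    ∫ r in Ioi (0:ℝ), Real.exp (-((r - m)/σ)^2/2)
      = σ * Real.sqrt (2*Real.pi) * stdNormalCDF (m/σ) := by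
  have hd : ∀ r : ℝ, HasDerivAt (fun r => σ * Real.sqrt (2*Real.pi) * stdNormalCDF ((r - m)/σ))
      (Real.exp (-((r - m)/σ)^2/2)) r := by
    intro r
    have hin : HasDerivAt (fun r : ℝ => (r - m)/σ) (1/σ) r :=
      ((hasDerivAt_id r).sub_const m).div_const σ
    have := ((hasDerivAt_stdNormalCDF ((r - m)/σ)).comp r hin).const_mul
      (σ * Real.sqrt (2*Real.pi))
    have h2π : Real.sqrt (2*Real.pi) ≠ 0 := ne_of_gt (Real.sqrt_pos.2 (by positivity))
    have hσ' : σ ≠ 0 := ne_of_gt hσ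
    have hEq : σ * Real.sqrt (2*Real.pi) * (phi ((r - m)/σ) * (1/σ))
        = Real.exp (-((r - m)/σ)^2/2) := by
      unfold phi; field_simp
    rw [← hEq]
    exact this
  have hint : IntegrableOn (fun r => Real.exp (-((r - m)/σ)^2/2)) (Ioi (0:ℝ)) := by
    have : Integrable (fun r : ℝ => Real.exp (-(1/(2*σ^2)) * r^2)) :=
      integrable_exp_neg_mul_sq (by positivity)
    have hσ' : σ ≠ 0 := ne_of_gt hσ
    refine ((this.comp_sub_right m).congr (Filter.Eventually.of_forall fun r => ?_)).integrableOn
    show Real.exp (-(1/(2*σ^2)) * (r - m)^2) = _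
    congr 1
    rw [div_pow]
    ring
  have hlim : Tendsto (fun r => σ * Real.sqrt (2*Real.pi) * stdNormalCDF ((r - m)/σ)) atTop
      (𝓝 (σ * Real.sqrt (2*Real.pi) * 1)) := by
    apply Tendsto.const_mul
    apply stdNormalCDF_tendsto_one.comp
    apply Tendsto.atTop_div_const hσ
    exact tendsto_atTop_add_const_right _ (-m) tendsto_id
  have := integral_Ioi_of_hasDerivAt_of_tendsto
    (f := fun r => σ * Real.sqrt (2*Real.pi) * stdNormalCDF ((r - m)/σ))
    (a := 0)
    (by exact ((hd 0).continuousAt.continuousWithinAt))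
    (fun x _ => hd x) hint hlim
  rw [this]
  have h0 : (0 - m)/σ = -(m/σ) := by ring
  rw [h0, stdNormalCDF_neg]
  ring

lemma gaussIntegrable (m σ : ℝ) (hσ : 0 < σ) :
    Integrable (fun r : ℝ => Real.exp (-((r - m)/σ)^2/2)) := by
  have h : Integrable (fun r : ℝ => Real.exp (-(1/(2*σ^2)) * r^2)) :=
    integrable_exp_neg_mul_sq (by positivity)
  have hσ' : σ ≠ 0 := ne_of_gt hσ
  refine (h.comp_sub_right m).congr (Filter.Eventually.of_forall fun r => ?_)
  show Real.exp (-(1/(2*σ^2)) * (r - m)^2) = _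
  congr 1
  rw [div_pow]
  ring

lemma key (ρ σ a : ℝ) (hσ : 0 < σ) (hρσ : ρ^2 + σ^2 = 1) :
    ∫ r in Ioi (0:ℝ), r * Real.exp (-r^2/2) * stdNormalCDF ((a - ρ*r)/σ)
      = stdNormalCDF (a/σ) - ρ * Real.exp (-a^2/2) * stdNormalCDF (ρ*a/σ) := by
  have hσ' : σ ≠ 0 := ne_of_gt hσ
  have hσ2 : σ^2 = 1 - ρ^2 := by linarith
  have hne : (1:ℝ) - ρ^2 ≠ 0 := by rw [← hσ2]; positivity
  -- pointwise exponent identity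
  have hpoint : ∀ r : ℝ, Real.exp (-r^2/2) * phi ((a - ρ*r)/σ)
      = (Real.sqrt (2*Real.pi))⁻¹ *
        (Real.exp (-a^2/2) * Real.exp (-((r - a*ρ)/σ)^2/2)) := by
    intro r
    have hexp : Real.exp (-r^2/2) * Real.exp (-((a - ρ*r)/σ)^2/2)
        = Real.exp (-a^2/2) * Real.exp (-((r - a*ρ)/σ)^2/2) := by
      rw [← Real.exp_add, ← Real.exp_add]
      congr 1
      rw [div_pow, div_pow, hσ2]
      field_simp
      ring
    calc Real.exp (-r^2/2) * phi ((a - ρ*r)/σ)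
        = (Real.sqrt (2*Real.pi))⁻¹ *
            (Real.exp (-r^2/2) * Real.exp (-((a - ρ*r)/σ)^2/2)) := by unfold phi; ring
      _ = _ := by rw [hexp]
  -- derivative of the antiderivative
  have hg : ∀ r : ℝ, HasDerivAt (fun r => -(Real.exp (-r^2/2) * stdNormalCDF ((a - ρ*r)/σ)))
      (r * Real.exp (-r^2/2) * stdNormalCDF ((a - ρ*r)/σ)
        + (ρ/σ) * (Real.exp (-r^2/2) * phi ((a - ρ*r)/σ))) r := by
    intro r
    have h1 : HasDerivAt (fun r : ℝ => -r^2/2) (-r) r := by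
      have := ((hasDerivAt_pow 2 r).neg).div_const 2
      refine this.congr_deriv ?_
      ring
    have hE : HasDerivAt (fun r : ℝ => Real.exp (-r^2/2)) (Real.exp (-r^2/2) * (-r)) r := h1.exp
    have hinner : HasDerivAt (fun r : ℝ => (a - ρ*r)/σ) (-ρ/σ) r := by
      have h2 : HasDerivAt (fun r : ℝ => a - ρ*r) (-ρ) r := by
        have := ((hasDerivAt_id r).const_mul ρ).const_sub a
        simpa using this
      exact h2.div_const σ
    have hΦ := (hasDerivAt_stdNormalCDF ((a - ρ*r)/σ)).comp r hinner
    have := (hE.mul hΦ).neg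
    refine this.congr_deriv ?_
    show -(Real.exp (-r^2/2) * (-r) * stdNormalCDF ((a - ρ*r)/σ)
      + Real.exp (-r^2/2) * (phi ((a - ρ*r)/σ) * (-ρ/σ))) = _
    ring
  -- integrability pieces
  have hI2 : IntegrableOn (fun r => Real.exp (-r^2/2) * phi ((a - ρ*r)/σ)) (Ioi (0:ℝ)) := by
    refine (Integrable.congr ?_ (Filter.Eventually.of_forall fun r => (hpoint r).symm)).integrableOn
    exact ((gaussIntegrable (a*ρ) σ hσ).const_mul _).const_mul _
  have hI1 : IntegrableOn (fun r => r * Real.exp (-r^2/2) * stdNormalCDF ((a - ρ*r)/σ))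
      (Ioi (0:ℝ)) := by
    have hmaj : Integrable (fun r : ℝ => |r| * Real.exp (-r^2/2)) := by
      have := integrable_rpow_mul_exp_neg_mul_sq (by norm_num : (0:ℝ) < 1/2)
        (by norm_num : (-1:ℝ) < 1)
      refine (this.abs.congr (Filter.Eventually.of_forall fun r => ?_))
      show |r ^ (1:ℝ) * Real.exp (-(1/2) * r^2)| = _
      rw [Real.rpow_one, abs_mul, abs_of_pos (Real.exp_pos _)]
      congr 2
      ring
    refine Integrable.mono' hmaj.integrableOn ?_ ?_
    · apply Continuous.aestronglyMeasurable
      exact (continuous_id.mul (Real.continuous_exp.comp (by continuity))).mul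
        (stdNormalCDF_cont.comp (by continuity))
    · refine Filter.Eventually.of_forall fun r => ?_
      have h1 : |stdNormalCDF ((a - ρ*r)/σ)| ≤ 1 :=
        abs_le.2 ⟨by linarith [stdNormalCDF_nonneg ((a - ρ*r)/σ)], stdNormalCDF_le_one _⟩
      calc ‖r * Real.exp (-r^2/2) * stdNormalCDF ((a - ρ*r)/σ)‖
          = |r| * Real.exp (-r^2/2) * |stdNormalCDF ((a - ρ*r)/σ)| := by
            rw [Real.norm_eq_abs, abs_mul, abs_mul, abs_of_pos (Real.exp_pos _)]
        _ ≤ |r| * Real.exp (-r^2/2) * 1 := by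
            apply mul_le_mul_of_nonneg_left h1; positivity
        _ = |r| * Real.exp (-r^2/2) := by ring
  -- limit at infinity
  have hlim : Tendsto (fun r : ℝ => -(Real.exp (-r^2/2) * stdNormalCDF ((a - ρ*r)/σ))) atTop
      (𝓝 0) := by
    have hb : Tendsto (fun r : ℝ => Real.exp (-r^2/2)) atTop (𝓝 0) := by
      apply Real.tendsto_exp_atBot.comp
      have h2 : Tendsto (fun r : ℝ => r^2) atTop atTop := tendsto_pow_atTop two_ne_zero
      exact (tendsto_neg_atBot_iff.mpr h2).atBot_div_const (by norm_num)
    apply squeeze_zero_norm _ hb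
    intro r
    have h1 : |stdNormalCDF ((a - ρ*r)/σ)| ≤ 1 :=
      abs_le.2 ⟨by linarith [stdNormalCDF_nonneg ((a - ρ*r)/σ)], stdNormalCDF_le_one _⟩
    calc ‖-(Real.exp (-r^2/2) * stdNormalCDF ((a - ρ*r)/σ))‖
        = Real.exp (-r^2/2) * |stdNormalCDF ((a - ρ*r)/σ)| := by
          rw [norm_neg, Real.norm_eq_abs, abs_mul, abs_of_pos (Real.exp_pos _)]
      _ ≤ Real.exp (-r^2/2) * 1 := by
          apply mul_le_mul_of_nonneg_left h1 (Real.exp_pos _).le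
      _ = Real.exp (-r^2/2) := by ring
  -- integration by parts
  have hparts := integral_Ioi_of_hasDerivAt_of_tendsto
    (f := fun r => -(Real.exp (-r^2/2) * stdNormalCDF ((a - ρ*r)/σ))) (a := 0)
    ((hg 0).continuousAt.continuousWithinAt) (fun x _ => hg x)
    (hI1.add (hI2.const_mul (ρ/σ))) hlim
  rw [integral_add hI1 (hI2.const_mul (ρ/σ)), integral_const_mul] at hparts
  -- compute the Gaussian piece
  have hG : ∫ r in Ioi (0:ℝ), Real.exp (-r^2/2) * phi ((a - ρ*r)/σ)
      = σ * Real.exp (-a^2/2) * stdNormalCDF (a*ρ/σ) := by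
    rw [setIntegral_congr_fun measurableSet_Ioi fun r _ => hpoint r]
    rw [integral_const_mul, integral_const_mul, gaussTail (a*ρ) σ hσ]
    have h2π : Real.sqrt (2*Real.pi) ≠ 0 := ne_of_gt (Real.sqrt_pos.2 (by positivity))
    field_simp
  rw [hG] at hparts
  have hg0 : (0:ℝ) - (fun r => -(Real.exp (-r^2/2) * stdNormalCDF ((a - ρ*r)/σ))) 0
      = stdNormalCDF (a/σ) := by
    show (0:ℝ) - -(Real.exp (-(0:ℝ)^2/2) * stdNormalCDF ((a - ρ*0)/σ)) = _
    norm_num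
  rw [hg0] at hparts
  have haρ : a*ρ/σ = ρ*a/σ := by ring
  rw [haρ] at hparts
  have : ρ/σ * (σ * Real.exp (-a^2/2) * stdNormalCDF (ρ*a/σ))
      = ρ * Real.exp (-a^2/2) * stdNormalCDF (ρ*a/σ) := by
    field_simp
  linarith [hparts, this]

/-- Formula (6.6): for `Y = √λ(ρR⁺ + √(1-ρ²)U)` with `R⁺` Rayleigh and `U` standard
normal independent, and `w < 0`,
`P(Y ≤ w)/P(Y < 0) = (2/(1-ρ))·(Φ(w/√(λ(1-ρ²))) - ρ·e^{-w²/(2λ)}·Φ(ρw/√(λ(1-ρ²))))`.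
Conditioning on `R⁺ = r` gives `P(Y ≤ w) = ∫_0^∞ r e^{-r²/2} Φ((w/√λ - ρr)/√(1-ρ²)) dr`,
and similarly for `P(Y < 0)` (taking `w = 0`, the distribution being continuous). -/
theorem stmt12 (ρ lam w : ℝ) (hρ₁ : -1 < ρ) (hρ₂ : ρ < 1) (hlam : 0 < lam)
    (hw : w < 0) :
    (∫ r in Set.Ioi (0 : ℝ),
        r * Real.exp (-r ^ 2 / 2) *
          stdNormalCDF ((w / Real.sqrt lam - ρ * r) / Real.sqrt (1 - ρ ^ 2))) /
      (∫ r in Set.Ioi (0 : ℝ),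
        r * Real.exp (-r ^ 2 / 2) *
          stdNormalCDF ((0 - ρ * r) / Real.sqrt (1 - ρ ^ 2))) =
      (2 / (1 - ρ)) *
        (stdNormalCDF (w / Real.sqrt (lam * (1 - ρ ^ 2))) -
          ρ * Real.exp (-w ^ 2 / (2 * lam)) *
            stdNormalCDF (ρ * w / Real.sqrt (lam * (1 - ρ ^ 2)))) := by
  have h1ρ2 : (0:ℝ) < 1 - ρ^2 := by nlinarith
  set σ := Real.sqrt (1 - ρ^2) with hσdef
  have hσ : 0 < σ := Real.sqrt_pos.2 h1ρ2
  have hσ2 : σ^2 = 1 - ρ^2 := Real.sq_sqrt h1ρ2.le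
  have hρσ : ρ^2 + σ^2 = 1 := by rw [hσ2]; ring
  have hsl : Real.sqrt lam ≠ 0 := ne_of_gt (Real.sqrt_pos.2 hlam)
  have hprod : Real.sqrt lam * σ = Real.sqrt (lam * (1 - ρ^2)) := by
    rw [hσdef, ← Real.sqrt_mul hlam.le]
  -- numerator
  have hnum := key ρ σ (w / Real.sqrt lam) hσ hρσ
  -- denominator
  have hden := key ρ σ 0 hσ hρσ
  have hden' : ∫ r in Set.Ioi (0:ℝ), r * Real.exp (-r^2/2) * stdNormalCDF ((0 - ρ*r)/σ)
      = (1 - ρ)/2 := by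
    rw [hden]
    norm_num [stdNormalCDF_zero]
    ring
  have ha1 : w / Real.sqrt lam / σ = w / Real.sqrt (lam * (1 - ρ^2)) := by
    rw [div_div, hprod]
  have ha2 : -(w / Real.sqrt lam)^2/2 = -w^2/(2*lam) := by
    rw [div_pow, Real.sq_sqrt hlam.le, neg_div, neg_div, div_div, mul_comm lam 2]
  have ha3 : ρ * (w / Real.sqrt lam) / σ = ρ * w / Real.sqrt (lam * (1 - ρ^2)) := by
    rw [mul_div_assoc, div_div, hprod, mul_div_assoc]
  rw [hnum, hden', ha1, ha2, ha3]
  have h1ρ : (1:ℝ) - ρ ≠ 0 := by linarith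
  field_simp
end
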